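/- arXiv:2605.01972 — 6 statements merged into one kernel-verified Lean document; each statement's English description precedes it below -/
import Mathlib

section
/- Assume ψ : [0,1] → [0,∞) is continuous and strictly increasing with ψ(0) = 0, and that x ↦ ψ(x)/x is strictly increasing on (0,1). Let δ ∈ (0, ψ(1)) satisfy 1 − δ ≥ δ/ψ⁻¹(δ) (equivalently, δ does not exceed the unique solution δ* of 1 − δ = δ/ψ⁻¹(δ)), and let x_N, x_T ∈ ℂ with |x_N| ≤ min(1, δ/ψ⁻¹(δ))·|x_T|. Then κ_{G_ψ}(p_δ; (x_N, x_T)) = |x_T|. -/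
open Complex Metric Set

/-- The Kobayashi–Royden metric of a domain `Ω ⊆ ℂ²` at point `z` in direction `X`:
the infimum of `1/λ` over all `λ > 0` admitting a holomorphic map `φ : 𝔻 → Ω`
with `φ 0 = z` and `φ' 0 = λ • X`. -/
noncomputable def kob (Ω : Set (ℂ × ℂ)) (z X : ℂ × ℂ) : ℝ :=
  sInf {c : ℝ | ∃ lam : ℝ, 0 < lam ∧ c = 1 / lam ∧
    ∃ φ : ℂ → ℂ × ℂ, DifferentiableOn ℂ φ (ball (0 : ℂ) 1) ∧
      MapsTo φ (ball (0 : ℂ) 1) Ω ∧ φ 0 = z ∧ deriv φ 0 = lam • X}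

/-- The model domain `G_ψ = {z ∈ 𝔻² : Re z₁ < ψ(|z₂|)}`. -/
def Gpsi (ψ : ℝ → ℝ) : Set (ℂ × ℂ) :=
  {z : ℂ × ℂ | ‖z.1‖ < 1 ∧ ‖z.2‖ < 1 ∧ z.1.re < ψ ‖z.2‖}

/-- The base point `p_δ = (-δ, 0)`. -/
noncomputable def pdel (δ : ℝ) : ℂ × ℂ := ((-δ : ℂ), 0)

private lemma hasDerivAt_snd' {φ : ℂ → ℂ × ℂ} {p : ℂ × ℂ} {z : ℂ} (h : HasDerivAt φ p z) :
    HasDerivAt (fun ζ => (φ ζ).2) p.2 z := by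
  simpa using (h.hasFDerivAt.snd).hasDerivAt

private lemma hasDerivAt_affine (u v z : ℂ) : HasDerivAt (fun ζ => u + v * ζ) v z := by
  simpa using ((hasDerivAt_id z).const_mul v).const_add u

/-- exact value of the Kobayashi–Royden metric in nearly tangential directions
when `ψ(x)/x` is strictly increasing and `δ` is small. -/
theorem stmt2 (ψ ψinv : ℝ → ℝ)
    (hcont : ContinuousOn ψ (Icc 0 1)) (hψ0 : ψ 0 = 0)
    (hnonneg : ∀ x ∈ Icc (0 : ℝ) 1, 0 ≤ ψ x)
    (hmono : StrictMonoOn ψ (Icc 0 1))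
    (hinv1 : ∀ x ∈ Icc (0 : ℝ) 1, ψinv (ψ x) = x)
    (hinv2 : ∀ y ∈ Icc 0 (ψ 1), ψ (ψinv y) = y)
    (hquot : StrictMonoOn (fun x => ψ x / x) (Ioo 0 1))
    (δ : ℝ) (hδ : δ ∈ Ioo 0 (ψ 1))
    (hδsmall : δ / ψinv δ ≤ 1 - δ)
    (xN xT : ℂ)
    (hmaj : ‖xN‖ ≤ min 1 (δ / ψinv δ) * ‖xT‖) :
    kob (Gpsi ψ) (pdel δ) (xN, xT) = ‖xT‖ := by
  obtain ⟨hδ0, hδ1⟩ := hδ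
  -- obtain a = ψinv δ ∈ (0,1) with ψ a = δ
  obtain ⟨a, haIcc, haψ⟩ : ∃ a ∈ Icc (0:ℝ) 1, ψ a = δ := by
    have h := intermediate_value_Icc (by norm_num : (0:ℝ) ≤ 1) hcont
    have hδmem : δ ∈ Icc (ψ 0) (ψ 1) := ⟨by rw [hψ0]; exact hδ0.le, hδ1.le⟩
    exact h hδmem
  have hainv : ψinv δ = a := by rw [← haψ, hinv1 a haIcc]
  have ha0 : 0 < a := by
    rcases lt_or_eq_of_le haIcc.1 with h | h
    · exact h
    · exfalso; rw [← h, hψ0] at haψ; linarith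
  have ha1 : a < 1 := by
    rcases lt_or_eq_of_le haIcc.2 with h | h
    · exact h
    · exfalso; rw [h] at haψ; linarith
  rw [hainv] at hδsmall hmaj
  have hda0 : 0 < δ / a := div_pos hδ0 ha0
  have hδlt1 : δ < 1 := by linarith
  -- the base point is in the domain
  have hpmem : pdel δ ∈ Gpsi ψ := by
    refine ⟨?_, ?_, ?_⟩ <;> simp [pdel, hψ0, abs_of_pos hδ0, hδlt1, hδ0]
  set S := {c : ℝ | ∃ lam : ℝ, 0 < lam ∧ c = 1 / lam ∧
    ∃ φ : ℂ → ℂ × ℂ, DifferentiableOn ℂ φ (ball (0 : ℂ) 1) ∧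
      MapsTo φ (ball (0 : ℂ) 1) (Gpsi ψ) ∧ φ 0 = pdel δ ∧
      deriv φ 0 = lam • ((xN, xT) : ℂ × ℂ)} with hS
  -- lower bound via the Schwarz lemma on the second coordinate
  have hlb : ∀ c ∈ S, ‖xT‖ ≤ c := by
    rintro c ⟨lam, hlam, rfl, φ, hdiff, hmaps, hφ0, hderiv⟩
    have h0mem : (0:ℂ) ∈ ball (0:ℂ) 1 := mem_ball_self one_pos
    have hφat : DifferentiableAt ℂ φ 0 :=
      hdiff.differentiableAt (isOpen_ball.mem_nhds h0mem)
    have hf : HasDerivAt (fun ζ => (φ ζ).2) (deriv φ 0).2 0 :=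
      hasDerivAt_snd' hφat.hasDerivAt
    have hfd : DifferentiableOn ℂ (fun ζ => (φ ζ).2) (ball (0:ℂ) 1) := hdiff.snd
    have hfm : MapsTo (fun ζ => (φ ζ).2) (ball (0:ℂ) 1) (ball (0:ℂ) 1) := by
      intro ζ hζ
      have := (hmaps hζ).2.1
      simpa [mem_ball_zero_iff] using this
    have hf0 : (fun ζ => (φ ζ).2) 0 = 0 := by simp [hφ0, pdel]
    have hsub : ball (0:ℂ) 1 ⊆ closedBall ((φ 0).2) 1 := by
      rw [hφ0]; exact ball_subset_closedBall
    have hschwarz := Complex.norm_deriv_le_one_of_mapsTo_ball hfd (hfm.mono_right hsub) one_pos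
    rw [hf.deriv] at hschwarz
    have h2 : (deriv φ 0).2 = lam • xT := by rw [hderiv]; rfl
    rw [h2] at hschwarz
    have : lam * ‖xT‖ ≤ 1 := by
      simpa [Complex.real_smul, norm_mul, abs_of_pos hlam] using hschwarz
    rw [le_div_iff₀ hlam, mul_comm]
    exact this
  show sInf S = ‖xT‖
  rcases eq_or_ne xT 0 with hxT | hxT
  · -- degenerate case: X = 0
    have hxN : xN = 0 := by
      have : ‖xN‖ ≤ 0 := by simpa [hxT] using hmaj
      exact norm_eq_zero.mp (le_antisymm this (norm_nonneg _))
    have hmem : ∀ lam : ℝ, 0 < lam → (1 / lam) ∈ S := by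
      intro lam hlam
      refine ⟨lam, hlam, rfl, fun _ => pdel δ, differentiableOn_const _,
        fun ζ _ => hpmem, rfl, ?_⟩
      simp [hxN, hxT, deriv_const]; rfl
    have hne : S.Nonempty := ⟨1 / 1, hmem 1 one_pos⟩
    have hbdd : BddBelow S := ⟨‖xT‖, hlb⟩
    refine le_antisymm ?_ (le_csInf hne hlb)
    have habs : ‖xT‖ = 0 := by simp [hxT]
    rw [habs]
    refine le_of_forall_pos_le_add (fun ε hε => ?_)
    have : sInf S ≤ 1 / (1/ε) := csInf_le hbdd (hmem (1/ε) (by positivity))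
    rw [one_div_one_div] at this
    linarith
  · -- main case: xT ≠ 0
    have hT0 : 0 < ‖xT‖ := norm_pos_iff.mpr hxT
    set lam : ℝ := ‖xT‖⁻¹ with hlamdef
    have hlam : 0 < lam := inv_pos.mpr hT0
    set c : ℂ := (lam : ℂ) * xN with hc
    set u : ℂ := (lam : ℂ) * xT with hu
    have hcabs : ‖c‖ ≤ δ / a := by
      have h1 : ‖c‖ = ‖xN‖ / ‖xT‖ := by
        simp [hc, norm_mul, hlamdef, abs_of_pos hT0, div_eq_inv_mul]
      rw [h1, div_le_iff₀ hT0]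
      calc ‖xN‖ ≤ min 1 (δ/a) * ‖xT‖ := hmaj
        _ ≤ (δ/a) * ‖xT‖ :=
          mul_le_mul_of_nonneg_right (min_le_right _ _) hT0.le
    have hcnonneg : 0 ≤ ‖c‖ := norm_nonneg _
    have huabs : ‖u‖ = 1 := by
      simp [hu, norm_mul, hlamdef, abs_of_pos hT0, inv_mul_cancel₀ hT0.ne']
    -- the extremal candidate
    set φ : ℂ → ℂ × ℂ := fun ζ => ((-δ : ℂ) + c * ζ, (0 : ℂ) + u * ζ) with hφ
    have hder : ∀ z : ℂ, HasDerivAt φ (c, u) z := fun z =>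
      (hasDerivAt_affine (-δ) c z).prodMk (hasDerivAt_affine 0 u z)
    have hmem : ‖xT‖ ∈ S := by
      refine ⟨lam, hlam, by rw [hlamdef, one_div, inv_inv], φ, ?_, ?_, ?_, ?_⟩
      · exact fun z _ => ((hder z).differentiableAt).differentiableWithinAt
      · intro ζ hζ
        rw [mem_ball_zero_iff] at hζ
        set t : ℝ := ‖ζ‖ with ht
        have ht0 : 0 ≤ t := norm_nonneg _
        have ht1 : t < 1 := by simpa using hζ
        have habs2 : ‖(0:ℂ) + u * ζ‖ = t := by
          simp [norm_mul, huabs, ht]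
        have hRe : ((-δ:ℂ) + c * ζ).re ≤ -δ + ‖c‖ * t := by
          have := Complex.re_le_norm (c * ζ)
          simp only [Complex.add_re, Complex.neg_re, Complex.ofReal_re]
          rw [norm_mul] at this
          linarith
        have hct : ‖c‖ * t ≤ (δ/a) * t :=
          mul_le_mul_of_nonneg_right hcabs ht0
        have key : -δ + ‖c‖ * t < ψ t := by
          rcases le_or_gt t a with hta | hta
          · rcases lt_or_eq_of_le hta with hta' | hta'
            · have h1 : (δ/a) * t < δ := by
                have := mul_lt_mul_of_pos_left hta' hda0
                rwa [div_mul_cancel₀ δ ha0.ne'] at this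
              have h2 : 0 ≤ ψ t := hnonneg t ⟨ht0, ht1.le⟩
              linarith
            · have h1 : (δ/a) * t ≤ δ := by
                rw [hta', div_mul_cancel₀ δ ha0.ne']
              have h2 : ψ t = δ := by rw [hta']; exact haψ
              linarith
          · have hquot' := hquot ⟨ha0, ha1⟩ ⟨ha0.trans hta, ht1⟩ hta
            simp only [haψ] at hquot'
            have htpos : 0 < t := ha0.trans hta
            have h1 : (δ/a) * t < ψ t := by
              rw [div_lt_div_iff₀ ha0 htpos] at hquot'
              rw [div_mul_eq_mul_div, div_lt_iff₀ ha0]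
              linarith [hquot']
            linarith
        refine ⟨?_, ?_, ?_⟩
        · -- |φ₁| < 1
          have : ‖(-δ:ℂ) + c * ζ‖ ≤ δ + ‖c‖ * t := by
            calc ‖(-δ:ℂ) + c * ζ‖
                ≤ ‖(-δ:ℂ)‖ + ‖c * ζ‖ := norm_add_le _ _
              _ = δ + ‖c‖ * t := by
                  rw [norm_mul]
                  congr 1
                  simpa [abs_of_pos hδ0] using (by
                    rw [norm_neg, Complex.norm_real, Real.norm_eq_abs, _root_.abs_of_pos hδ0])
          have h2 : ‖c‖ * t < 1 - δ := by
            rcases eq_or_lt_of_le hcnonneg with h | h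
            · rw [← h, zero_mul]; linarith
            · calc ‖c‖ * t ≤ (δ/a) * t := hct
                _ < δ/a * 1 := by
                    apply mul_lt_mul_of_pos_left ht1 hda0
                _ ≤ 1 - δ := by rw [mul_one]; exact hδsmall
          show ‖(-δ:ℂ) + c * ζ‖ < 1
          linarith
        · rw [habs2]; exact ht1
        · rw [habs2]
          calc ((-δ:ℂ) + c * ζ).re ≤ -δ + ‖c‖ * t := hRe
            _ < ψ t := key
      · simp [hφ, pdel]
      · rw [(hder 0).deriv]
        simp [hc, hu, Prod.ext_iff, Complex.real_smul]
    exact le_antisymm (csInf_le ⟨‖xT‖, hlb⟩ hmem) (le_csInf ⟨_, hmem⟩ hlb)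
end

section
/- Let β > 1 and ψ(x) = x^β. Let δ ∈ (0,1) satisfy 1 − δ ≥ δ^{1 − 1/β} (equivalently, δ does not exceed the unique solution δ* of 1 − δ = δ^{1−1/β}). Then for all x_N, x_T ∈ ℂ with δ^{1/β − 1}·|x_N| ≤ |x_T|: κ_{G_ψ}(p_δ; (x_N, x_T)) = |x_T|. -/
open Complex Metric Set

/-- Key elementary inequality: `δ^{1-1/β} t < δ + t^β` for `t ≥ 0`. -/
lemma key_ineq (β δ t : ℝ) (hβ : 1 < β) (hδ0 : 0 < δ) (ht : 0 ≤ t) :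
    δ ^ (1 - 1/β) * t < δ + t ^ β := by
  have hβ0 : (0:ℝ) < β := by linarith
  rcases le_or_gt t (δ ^ (1/β)) with h | h
  · rcases eq_or_lt_of_le ht with h0 | h0
    · rw [← h0]
      have : (0:ℝ) ^ β = 0 := Real.zero_rpow hβ0.ne'
      simp [this, hδ0]
    · have h1 : δ ^ (1 - 1/β) * t ≤ δ ^ (1 - 1/β) * δ ^ (1/β) :=
        mul_le_mul_of_nonneg_left h (Real.rpow_nonneg hδ0.le _)
      have h2 : δ ^ (1 - 1/β) * δ ^ (1/β) = δ := by
        rw [← Real.rpow_add hδ0]; norm_num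
      have h3 : (0:ℝ) < t ^ β := Real.rpow_pos_of_pos h0 β
      linarith
  · have ht0 : 0 < t := lt_of_le_of_lt (Real.rpow_nonneg hδ0.le _) h
    have h1 : δ ^ (1 - 1/β) ≤ t ^ (β - 1) := by
      have h2 : (δ ^ (1/β)) ^ (β - 1) ≤ t ^ (β - 1) :=
        Real.rpow_le_rpow (Real.rpow_nonneg hδ0.le _) h.le (by linarith)
      have h3 : (δ ^ (1/β)) ^ (β - 1) = δ ^ (1 - 1/β) := by
        rw [← Real.rpow_mul hδ0.le]
        congr 1
        field_simp
      rwa [h3] at h2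
    have h4 : δ ^ (1 - 1/β) * t ≤ t ^ (β - 1) * t :=
      mul_le_mul_of_nonneg_right h1 ht
    have h5 : t ^ (β - 1) * t = t ^ β := by
      rw [← Real.rpow_add_one ht0.ne' (β - 1), sub_add_cancel]
    linarith

/-- for `ψ(x) = x^β`, `β > 1`, `δ` small (`1 − δ ≥ δ^{1−1/β}`), and
`δ^{1/β−1}|x_N| ≤ |x_T|`, the Kobayashi–Royden metric equals `|x_T|`. -/
theorem stmt12 (β : ℝ) (hβ : 1 < β) (δ : ℝ) (hδ : δ ∈ Ioo (0 : ℝ) 1)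
    (hδsmall : δ ^ (1 - 1 / β) ≤ 1 - δ)
    (xN xT : ℂ) (hmaj : δ ^ (1 / β - 1) * ‖xN‖ ≤ ‖xT‖) :
    kob (Gpsi (fun x => x ^ β)) (pdel δ) (xN, xT) = ‖xT‖ := by
  obtain ⟨hδ0, hδ1⟩ := hδ
  have hrpos : (0:ℝ) < δ ^ (1 - 1/β) := Real.rpow_pos_of_pos hδ0 _
  have hNT : ‖xN‖ ≤ δ ^ (1 - 1/β) * ‖xT‖ := by
    have h1 : δ ^ (1/β - 1) = (δ ^ (1 - 1/β))⁻¹ := by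
      rw [← Real.rpow_neg hδ0.le]; ring_nf
    rw [h1, inv_mul_le_iff₀ hrpos] at hmaj
    exact hmaj
  set S := {c : ℝ | ∃ lam : ℝ, 0 < lam ∧ c = 1 / lam ∧
    ∃ φ : ℂ → ℂ × ℂ, DifferentiableOn ℂ φ (ball (0 : ℂ) 1) ∧
      MapsTo φ (ball (0 : ℂ) 1) (Gpsi (fun x => x ^ β)) ∧ φ 0 = pdel δ ∧
      deriv φ 0 = lam • ((xN, xT) : ℂ × ℂ)} with hS
  have hkob : kob (Gpsi (fun x => x ^ β)) (pdel δ) (xN, xT) = sInf S := rfl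
  -- lower bound via Schwarz
  have hlb : ∀ c ∈ S, ‖xT‖ ≤ c := by
    rintro c ⟨lam, hlam, rfl, φ, hdiff, hmaps, hφ0, hderiv⟩
    set f : ℂ → ℂ := fun ζ => (φ ζ).2 with hf
    have hfd : DifferentiableOn ℂ f (ball (0:ℂ) 1) := fun z hz => (hdiff z hz).snd
    have hf0 : f 0 = 0 := by simp [hf, hφ0, pdel]
    have hfm : MapsTo f (ball (0:ℂ) 1) (ball (f 0) 1) := by
      intro ζ hζ
      have := (hmaps hζ).2.1
      rw [hf0, mem_ball_zero_iff]
      simpa using this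
    have hφda : HasDerivAt φ (deriv φ 0) 0 :=
      (hdiff.differentiableAt (isOpen_ball.mem_nhds (mem_ball_self one_pos))).hasDerivAt
    have hfda : HasDerivAt f ((deriv φ 0).2) 0 :=
      ((ContinuousLinearMap.snd ℂ ℂ ℂ).hasFDerivAt).comp_hasDerivAt 0 hφda
    have hdf : deriv f 0 = lam • xT := by
      rw [hfda.deriv, hderiv]; rfl
    have hsch := Complex.norm_deriv_le_div_of_mapsTo_ball hfd (hfm.mono_right ball_subset_closedBall) one_pos
    rw [hdf] at hsch
    have habs : ‖lam • xT‖ = lam * ‖xT‖ := by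
      rw [Complex.real_smul, norm_mul, Complex.norm_real, Real.norm_eq_abs, abs_of_pos hlam]
    rw [habs] at hsch
    rw [le_div_iff₀ hlam, mul_comm]
    norm_num at hsch
    linarith
  have hBdd : BddBelow S := ⟨‖xT‖, hlb⟩
  -- base point is in the domain
  have hpdel : pdel δ ∈ Gpsi (fun x => x ^ β) := by
    refine ⟨?_, ?_, ?_⟩
    · show ‖-(δ:ℂ)‖ < 1
      rw [norm_neg, Complex.norm_real, Real.norm_eq_abs, abs_of_pos hδ0]; exact hδ1
    · show ‖(0:ℂ)‖ < 1
      simp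
    · show (-(δ:ℂ)).re < (‖(0:ℂ)‖) ^ β
      have : ‖(0:ℂ)‖ = 0 := by simp
      rw [this, Real.zero_rpow (by positivity : β ≠ 0)]
      simp [hδ0]
  by_cases hxT : xT = 0
  · -- then xN = 0 and the infimum is 0
    have hxN : xN = 0 := by
      subst hxT
      have hp : (0:ℝ) < δ ^ (1/β - 1) := Real.rpow_pos_of_pos hδ0 _
      rw [norm_zero] at hmaj
      have : ‖xN‖ ≤ 0 := by nlinarith [norm_nonneg xN]
      simpa using le_antisymm this (norm_nonneg xN)
    have hmemc : ∀ lam : ℝ, 0 < lam → (1 / lam) ∈ S := by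
      intro lam hlam
      refine ⟨lam, hlam, rfl, fun _ => pdel δ, differentiableOn_const _,
        fun ζ _ => hpdel, rfl, ?_⟩
      rw [deriv_const, hxT, hxN]
      simp; rfl
    rw [hkob, hxT]
    simp only [norm_zero]
    apply le_antisymm
    · apply le_of_forall_pos_le_add
      intro ε hε
      have := csInf_le hBdd (hmemc ε⁻¹ (by positivity))
      rw [one_div, inv_inv] at this
      linarith
    · exact le_csInf ⟨_, hmemc 1 one_pos⟩ (by simpa [hxT] using hlb)
  · -- the explicit extremal candidate
    have hxTpos : 0 < ‖xT‖ := norm_pos_iff.mpr hxT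
    set lam : ℝ := (‖xT‖)⁻¹ with hlamdef
    have hlam : 0 < lam := by positivity
    have hmem : ‖xT‖ ∈ S := by
      refine ⟨lam, hlam, by rw [one_div, inv_inv], 
        fun ζ => ((-δ : ℂ) + (lam • xN) * ζ, (lam • xT) * ζ), ?_, ?_, ?_, ?_⟩
      · intro z _
        exact (((differentiable_id.const_mul _).const_add _).prodMk
          (differentiable_id.const_mul _)).differentiableAt.differentiableWithinAt
      · intro ζ hζ
        have hζ1 : ‖ζ‖ < 1 := by
          simpa [mem_ball, Complex.dist_eq] using hζ
        have habsaN : ‖lam • xN‖ ≤ δ ^ (1 - 1/β) := by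
          rw [Complex.real_smul, norm_mul, Complex.norm_real, Real.norm_eq_abs, abs_of_pos hlam,
            hlamdef, inv_mul_le_iff₀ hxTpos]
          linarith [hNT]
        have habsbT : ‖(lam • xT) * ζ‖ = ‖ζ‖ := by
          rw [norm_mul, Complex.real_smul, norm_mul, Complex.norm_real, Real.norm_eq_abs, abs_of_pos hlam,
            hlamdef, inv_mul_cancel₀ hxTpos.ne', one_mul]
        have hδc : ‖-(δ:ℂ)‖ = δ := by
          rw [norm_neg, Complex.norm_real, Real.norm_eq_abs, abs_of_pos hδ0]
        have h1 : ‖(lam • xN) * ζ‖ ≤ δ ^ (1 - 1/β) * ‖ζ‖ := by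
          rw [norm_mul]
          exact mul_le_mul_of_nonneg_right habsaN (norm_nonneg ζ)
        have hkey := key_ineq β δ (‖ζ‖) hβ hδ0 (norm_nonneg ζ)
        refine ⟨?_, ?_, ?_⟩
        · calc ‖-(δ:ℂ) + (lam • xN) * ζ‖
              ≤ ‖-(δ:ℂ)‖ + ‖(lam • xN) * ζ‖ := norm_add_le _ _
            _ ≤ δ + δ ^ (1 - 1/β) * ‖ζ‖ := by rw [hδc]; linarith
            _ < δ + δ ^ (1 - 1/β) * 1 := by
                have := mul_lt_mul_of_pos_left hζ1 hrpos
                linarith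
            _ ≤ 1 := by rw [mul_one]; linarith
        · rw [habsbT]; exact hζ1
        · show (-(δ:ℂ) + (lam • xN) * ζ).re < (‖(lam • xT) * ζ‖) ^ β
          have hre : (-(δ:ℂ) + (lam • xN) * ζ).re ≤ -δ + ‖(lam • xN) * ζ‖ := by
            rw [Complex.add_re]
            have := Complex.re_le_norm ((lam • xN) * ζ)
            simp only [Complex.neg_re, Complex.ofReal_re]
            linarith
          rw [habsbT]
          linarith
      · simp [pdel]
      · have hda : HasDerivAt (fun ζ : ℂ => (-δ : ℂ) + (lam • xN) * ζ) (lam • xN) 0 := by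
          simpa using ((hasDerivAt_id (0:ℂ)).const_mul (lam • xN)).const_add (-δ : ℂ)
        have hdb : HasDerivAt (fun ζ : ℂ => (lam • xT) * ζ) (lam • xT) 0 := by
          simpa using (hasDerivAt_id (0:ℂ)).const_mul (lam • xT)
        rw [(hda.prodMk hdb).deriv]
        rfl
    rw [hkob]
    exact le_antisymm (csInf_le hBdd hmem) (le_csInf ⟨_, hmem⟩ hlb)
end

section
/- Let ψ : [0,1] → [0,∞) be continuous and nondecreasing with ψ(0) = 0, let δ ∈ (0,1), x_T ∈ ℂ and λ > 0. Suppose φ = (φ₁, φ₂) : 𝔻 → G_ψ is a holomorphic map with φ(0) = p_δ = (−δ, 0) and φ′(0) = λ·(1, x_T). Then for every r ∈ (0,1], setting M := ψ(min(1, r·(λ·|x_T| + r))), one has λ ≤ 2(M + δ)/r. -/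
open Complex Metric Set Topology

lemma pick_quad (α t s : ℝ) (hα : 0 ≤ α) (ht : 0 ≤ t) (hs : 0 ≤ s)
    (hα1 : α < 1) (ht1 : t < 1)
    (hQ : s^2*(1 - α^2*t^2) + α^2 - t^2 ≤ 2*α*s*(1 - t^2)) : s ≤ α + t := by
  by_contra hc
  push_neg at hc
  have hαt : α * t < 1 := by nlinarith
  have hf1 : 0 < (1 + α*t)*s - (α + t) := by
    nlinarith [mul_nonneg (mul_nonneg hα ht) hs]
  have hf2 : 0 < (1 - α*t)*s - (α - t) := by
    have h2 : 0 ≤ t * (2 - α^2 - α*t) := mul_nonneg ht (by nlinarith)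
    nlinarith [mul_lt_mul_of_pos_left hc (show (0:ℝ) < 1 - α*t by linarith)]
  nlinarith [mul_pos hf1 hf2]

lemma mobius_le (a w : ℂ) (ha : ‖a‖ < 1) (hw : ‖w‖ ≤ 1) :
    ‖w - a‖ ≤ ‖1 - (starRingEnd ℂ) a * w‖ := by
  have key : Complex.normSq (1 - (starRingEnd ℂ) a * w) - Complex.normSq (w - a)
      = (1 - Complex.normSq a) * (1 - Complex.normSq w) := by
    simp [Complex.normSq_apply, Complex.mul_re, Complex.mul_im, Complex.sub_re, Complex.sub_im]
    ring
  have h1 : Complex.normSq a ≤ 1 := by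
    rw [← Complex.sq_norm]; nlinarith [norm_nonneg a]
  have h2 : Complex.normSq w ≤ 1 := by
    rw [← Complex.sq_norm]; nlinarith [norm_nonneg w]
  have : Complex.normSq (w - a) ≤ Complex.normSq (1 - (starRingEnd ℂ) a * w) := by nlinarith
  rw [Complex.norm_def, Complex.norm_def]
  exact Real.sqrt_le_sqrt this

lemma pick_bound (f : ℂ → ℂ) (hd : DifferentiableOn ℂ f (ball 0 1))
    (hm : MapsTo f (ball (0:ℂ) 1) (ball (0:ℂ) 1)) (h0 : f 0 = 0)
    (z : ℂ) (hz : z ∈ ball (0:ℂ) 1) :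
    ‖f z‖ ≤ ‖z‖ * (‖deriv f 0‖ + ‖z‖) := by
  set a := deriv f 0 with ha
  have hzlt : ‖z‖ < 1 := mem_ball_zero_iff.1 hz
  have hfz : ‖f z‖ ≤ ‖z‖ :=
    Complex.norm_le_norm_of_mapsTo_ball hd (hm.mono_right ball_subset_closedBall) h0 hzlt
  by_cases hα : 1 ≤ ‖a‖
  · nlinarith [norm_nonneg z, norm_nonneg (f z)]
  push_neg at hα
  have hball : (ball (0:ℂ) 1) ∈ 𝓝 (0:ℂ) := isOpen_ball.mem_nhds (mem_ball_self one_pos)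
  set h := dslope f 0 with hh
  have hhdiff : DifferentiableOn ℂ h (ball 0 1) := (differentiableOn_dslope hball).mpr hd
  have hm' : MapsTo f (ball (0:ℂ) 1) (ball (f 0) 1) := by rwa [h0]
  have hh_le : ∀ w ∈ ball (0:ℂ) 1, ‖h w‖ ≤ 1 := fun w hw => by
    simpa using Complex.norm_dslope_le_div_of_mapsTo_ball hd (hm'.mono_right ball_subset_closedBall) hw
  have hh0 : h 0 = a := dslope_same f 0
  have hden : ∀ w ∈ ball (0:ℂ) 1, (1 - (starRingEnd ℂ) a * h w) ≠ 0 := by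
    intro w hw he
    rw [sub_eq_zero] at he
    have h1 : ‖(starRingEnd ℂ) a * h w‖ = 1 := by rw [← he]; simp
    have h2 : ‖(starRingEnd ℂ) a * h w‖ ≤ ‖a‖ * 1 := by
      rw [norm_mul, Complex.norm_conj]
      exact mul_le_mul_of_nonneg_left (hh_le w hw) (norm_nonneg a)
    rw [mul_one] at h2; linarith
  set k := fun w => (h w - a) / (1 - (starRingEnd ℂ) a * h w) with hk
  have hkdiff : DifferentiableOn ℂ k (ball 0 1) :=
    DifferentiableOn.div (hhdiff.sub_const a)
      ((differentiableOn_const 1).sub (hhdiff.const_mul _)) hden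
  have hk0 : k 0 = 0 := by simp [hk, hh0]
  have hk_le : ∀ w ∈ ball (0:ℂ) 1, ‖k w‖ ≤ 1 := fun w hw => by
    rw [hk]
    simp only [norm_div]
    exact div_le_one_of_le₀ (mobius_le a (h w) hα (hh_le w hw)) (norm_nonneg _)
  have hkz : ‖k z‖ ≤ ‖z‖ := by
    refine le_of_forall_pos_le_add fun ε hε => ?_
    have hmk : MapsTo k (ball (0:ℂ) 1) (ball (k 0) (1+ε)) := fun w hw => by
      rw [hk0, mem_ball_zero_iff]
      exact lt_of_le_of_lt (hk_le w hw) (by linarith)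
    have h3 := Complex.dist_le_div_mul_dist_of_mapsTo_ball hkdiff (hmk.mono_right ball_subset_closedBall) hz
    rw [hk0, dist_zero_right, dist_zero_right] at h3
    have h4 : ε * ‖z‖ ≤ ε := by nlinarith [norm_nonneg z]
    calc ‖k z‖ ≤ (1+ε)/1 * ‖z‖ := h3
      _ = ‖z‖ + ε * ‖z‖ := by ring
      _ ≤ ‖z‖ + ε := by linarith
  have hfact : ‖h z - a‖ ≤
      ‖z‖ * ‖1 - (starRingEnd ℂ) a * h z‖ := by
    have he : h z - a = k z * (1 - (starRingEnd ℂ) a * h z) := by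
      rw [hk]
      rw [div_mul_cancel₀ _ (hden z hz)]
    rw [he, norm_mul]
    exact mul_le_mul_of_nonneg_right hkz (norm_nonneg _)
  set s := ‖h z‖ with hs
  set t := ‖z‖ with ht
  set α := ‖a‖ with hα'
  set u := ((starRingEnd ℂ) a * h z).re with hu'
  have e1 : Complex.normSq (h z - a) = Complex.normSq (h z) - 2*u + Complex.normSq a := by
    simp [Complex.normSq_apply, hu', Complex.mul_re, Complex.sub_re, Complex.sub_im]
    ring
  have e2 : Complex.normSq (1 - (starRingEnd ℂ) a * h z)
      = 1 - 2*u + Complex.normSq a * Complex.normSq (h z) := by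
    simp [Complex.normSq_apply, hu', Complex.mul_re, Complex.mul_im, Complex.sub_re,
      Complex.sub_im]
    ring
  have hsq : Complex.normSq (h z - a) ≤ t^2 * Complex.normSq (1 - (starRingEnd ℂ) a * h z) := by
    rw [← Complex.sq_norm, ← Complex.sq_norm]
    nlinarith [norm_nonneg (h z - a), norm_nonneg (1 - (starRingEnd ℂ) a * h z),
      norm_nonneg z]
  have hu : |u| ≤ α * s := by
    calc |u| ≤ ‖(starRingEnd ℂ) a * h z‖ := Complex.abs_re_le_norm _
      _ = α * s := by rw [norm_mul, Complex.norm_conj]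
  rw [← Complex.sq_norm (h z), ← Complex.sq_norm a, ← hs, ← hα'] at e1 e2
  have hQ : s^2*(1 - α^2*t^2) + α^2 - t^2 ≤ 2*α*s*(1 - t^2) := by
    rcases abs_le.1 hu with ⟨hu1, hu2⟩
    have hprod : 0 ≤ (α*s - u)*(1 - t^2) := by
      have h5 : (0:ℝ) ≤ 1 - t^2 := by nlinarith [norm_nonneg z]
      exact mul_nonneg (by linarith) h5
    rw [e1, e2] at hsq
    nlinarith [hprod, hsq]
  have hs_le : s ≤ α + t := pick_quad α t s (norm_nonneg a) (norm_nonneg z)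
    (norm_nonneg _) hα hzlt hQ
  rcases eq_or_ne z 0 with rfl | hz0
  · simp only [h0, norm_zero]
    positivity
  · have hzval : h z = f z / z := by
      rw [hh, dslope_of_ne f hz0, slope_def_field, h0]
      simp [div_sub_div_same, sub_zero]
    have ht0 : t ≠ 0 := by
      rw [ht]; exact norm_ne_zero_iff.mpr hz0
    have heq : ‖f z‖ = t * s := by
      rw [hs, hzval, norm_div, ← ht, mul_comm, div_mul_cancel₀ _ ht0]
    rw [heq]
    exact mul_le_mul_of_nonneg_left hs_le (norm_nonneg z)


/-- key lemma: if `φ : 𝔻 → G_ψ` is holomorphic with `φ(0) = p_δ` and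
`φ'(0) = λ·(1, x_T)`, then for `0 < r ≤ 1`, with `M = ψ(min(1, r(λ|x_T| + r)))`,
one has `λ ≤ 2(M + δ)/r`. -/
theorem stmt13 (ψ : ℝ → ℝ)
    (hcont : ContinuousOn ψ (Icc 0 1)) (hψ0 : ψ 0 = 0)
    (hnonneg : ∀ x ∈ Icc (0 : ℝ) 1, 0 ≤ ψ x)
    (hmono : MonotoneOn ψ (Icc 0 1))
    (δ : ℝ) (hδ : δ ∈ Ioo (0 : ℝ) 1) (xT : ℂ) (lam : ℝ) (hlam : 0 < lam)
    (φ : ℂ → ℂ × ℂ) (hφdiff : DifferentiableOn ℂ φ (ball (0 : ℂ) 1))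
    (hφmaps : MapsTo φ (ball (0 : ℂ) 1) (Gpsi ψ))
    (hφ0 : φ 0 = pdel δ)
    (hφ'0 : deriv φ 0 = lam • (((1 : ℂ), xT) : ℂ × ℂ))
    (r : ℝ) (hr : r ∈ Ioc (0 : ℝ) 1) :
    lam ≤ 2 * (ψ (min 1 (r * (lam * ‖xT‖ + r))) + δ) / r := by
  obtain ⟨hr0, hr1⟩ := hr
  have hsub : ball (0:ℂ) r ⊆ ball 0 1 := ball_subset_ball hr1
  have h0mem : (0:ℂ) ∈ ball (0:ℂ) 1 := mem_ball_self one_pos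
  have hφat : DifferentiableAt ℂ φ 0 := hφdiff.differentiableAt (isOpen_ball.mem_nhds h0mem)
  set φ₂ : ℂ → ℂ := fun z => (φ z).2 with hφ₂
  have hd2 : HasDerivAt φ₂ (deriv φ 0).2 0 := by
    have := (ContinuousLinearMap.snd ℂ ℂ ℂ).hasFDerivAt.comp_hasDerivAt (0:ℂ) hφat.hasDerivAt
    exact this
  have hφ₂diff : DifferentiableOn ℂ φ₂ (ball 0 1) := hφdiff.snd
  have hφ₂0 : φ₂ 0 = 0 := by simp [hφ₂, hφ0, pdel]
  have hder2 : deriv φ₂ 0 = (lam:ℂ) * xT := by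
    rw [hd2.deriv, hφ'0]
    simp [Complex.real_smul]
  have habs2 : ‖deriv φ₂ 0‖ = lam * ‖xT‖ := by
    rw [hder2, norm_mul, Complex.norm_real, Real.norm_eq_abs, abs_of_pos hlam]
  have hmaps2 : MapsTo φ₂ (ball (0:ℂ) 1) (ball (0:ℂ) 1) := fun z hz =>
    mem_ball_zero_iff.2 (hφmaps hz).2.1
  set m := min 1 (r * (lam * ‖xT‖ + r)) with hm
  have hm0 : 0 ≤ m := le_min one_pos.le (by positivity)
  have hm1 : m ≤ 1 := min_le_left _ _
  have hmm : m ∈ Icc (0:ℝ) 1 := ⟨hm0, hm1⟩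
  have hM0 : 0 ≤ ψ m := hnonneg m hmm
  have hkey : ∀ z ∈ ball (0:ℂ) r, ((φ z).1).re < ψ m := by
    intro z hz
    have hz1 : z ∈ ball (0:ℂ) 1 := hsub hz
    have hG := hφmaps hz1
    have hb := pick_bound φ₂ hφ₂diff hmaps2 hφ₂0 z hz1
    rw [habs2] at hb
    have hzr : ‖z‖ < r := mem_ball_zero_iff.1 hz
    have habs : ‖φ₂ z‖ ≤ m := by
      refine le_min (le_of_lt hG.2.1) (hb.trans ?_)
      have h6 : 0 ≤ (r - ‖z‖) * (lam * ‖xT‖) :=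
        mul_nonneg (by linarith) (mul_nonneg hlam.le (norm_nonneg xT))
      nlinarith [norm_nonneg z, mul_le_mul hzr.le hzr.le (norm_nonneg z) hr0.le]
    have hψle : ψ (‖φ₂ z‖) ≤ ψ m :=
      hmono ⟨norm_nonneg _, le_of_lt hG.2.1⟩ hmm habs
    exact lt_of_lt_of_le hG.2.2 hψle
  set A := ψ m + δ with hA
  have hApos : 0 < A := by have := hδ.1; simp only [hA]; linarith
  set F : ℂ → ℂ := fun z => (φ z).1 + (δ:ℂ) with hF
  have hF0 : F 0 = 0 := by simp [hF, hφ0, pdel]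
  have hFdiff : DifferentiableOn ℂ F (ball (0:ℂ) r) := ((hφdiff.fst).mono hsub).add_const _
  have hFre : ∀ z ∈ ball (0:ℂ) r, (F z).re < A := by
    intro z hz
    have := hkey z hz
    simp only [hF, Complex.add_re, Complex.ofReal_re, hA]
    linarith
  have habslt : ∀ z ∈ ball (0:ℂ) r, ‖F z‖ < ‖((2*A:ℝ):ℂ) - F z‖ := by
    intro z hz
    have hre := hFre z hz
    have hn : Complex.normSq (F z) < Complex.normSq (((2*A:ℝ):ℂ) - F z) := by
      simp only [Complex.normSq_apply, Complex.sub_re, Complex.sub_im, Complex.ofReal_re,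
        Complex.ofReal_im]
      nlinarith
    rw [Complex.norm_def, Complex.norm_def]
    exact Real.sqrt_lt_sqrt (Complex.normSq_nonneg _) hn
  have hden : ∀ z ∈ ball (0:ℂ) r, (((2*A:ℝ):ℂ)) - F z ≠ 0 := by
    intro z hz he
    have := habslt z hz
    rw [he] at this
    simp at this
    exact absurd this (not_lt.2 (norm_nonneg _))
  set g : ℂ → ℂ := fun z => F z / (((2*A:ℝ):ℂ) - F z) with hg
  have hgdiff : DifferentiableOn ℂ g (ball (0:ℂ) r) :=
    hFdiff.div ((differentiableOn_const _).sub hFdiff) hden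
  have hg0 : g 0 = 0 := by simp [hg, hF0]
  have hgmaps : MapsTo g (ball (0:ℂ) r) (ball (g 0) 1) := by
    intro z hz
    rw [hg0, mem_ball_zero_iff]
    have hne := hden z hz
    simp only [hg, norm_div]
    rw [div_lt_one (by
      rcases (norm_nonneg (((2*A:ℝ):ℂ) - F z)).lt_or_eq with h | h
      · exact h
      · exact absurd (norm_eq_zero.1 h.symm) hne)]
    exact habslt z hz
  have hSch := Complex.norm_deriv_le_div_of_mapsTo_ball hgdiff (hgmaps.mono_right ball_subset_closedBall) hr0
  have hd1 : HasDerivAt (fun z => (φ z).1) (deriv φ 0).1 0 := by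
    have := (ContinuousLinearMap.fst ℂ ℂ ℂ).hasFDerivAt.comp_hasDerivAt (0:ℂ) hφat.hasDerivAt
    exact this
  have hderF : HasDerivAt F ((lam:ℂ)) 0 := by
    have h1 := hd1.add_const (δ:ℂ)
    have h2 : (deriv φ 0).1 = (lam:ℂ) := by rw [hφ'0]; simp [Complex.real_smul]
    rw [h2] at h1
    exact h1
  have hdenne : (((2*A:ℝ):ℂ)) - F 0 ≠ 0 := hden 0 (mem_ball_self hr0)
  have hderg := hderF.div ((hasDerivAt_const (0:ℂ) (((2*A:ℝ):ℂ))).sub hderF) hdenne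
  have hdg : deriv g 0 = (lam:ℂ) / ((2*A:ℝ):ℂ) := by
    have hB : ((A:ℝ):ℂ) ≠ 0 := Complex.ofReal_ne_zero.mpr hApos.ne'
    have hgeq : g = F / ((fun _ => ((2*A:ℝ):ℂ)) - F) := rfl
    rw [hgeq, hderg.deriv]
    simp only [Pi.sub_apply]
    rw [hF0]
    rw [hF0, sub_zero] at hdenne
    rw [sub_zero]
    field_simp
    ring
  rw [hdg, norm_div, Complex.norm_real, Complex.norm_real, Real.norm_eq_abs, Real.norm_eq_abs, abs_of_pos hlam,
    abs_of_pos (by linarith : (0:ℝ) < 2*A)] at hSch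
  rw [div_le_div_iff₀ (by linarith) hr0] at hSch
  rw [show 2 * (ψ m + δ) / r = 2*A/r by rw [hA]]
  rw [le_div_iff₀ hr0]
  linarith
end

section
/- Assume ψ : [0,1] → [0,∞) is continuous and strictly increasing with ψ(0) = 0, and that x ↦ ψ(x)/x is nondecreasing on (0,1). Let δ ∈ (0, ψ(1)) satisfy δ + δ/ψ⁻¹(δ) ≤ 1. Then for every a ∈ ℂ with |a| ≤ δ/ψ⁻¹(δ) and every θ ∈ ℝ, the holomorphic map φ(ζ) := (−δ + aζ, e^{iθ}ζ) maps 𝔻 into G_ψ. In particular, κ_{G_ψ}(p_δ; (1, ψ⁻¹(δ)/δ)) ≤ ψ⁻¹(δ)/δ. -/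
open Complex Metric Set

/-- the maps `ζ ↦ (−δ + aζ, e^{iθ}ζ)` with `|a| ≤ δ/ψ⁻¹(δ)` send `𝔻`
into `G_ψ`; consequently `κ_{G_ψ}(p_δ; (1, ψ⁻¹(δ)/δ)) ≤ ψ⁻¹(δ)/δ`. -/
theorem stmt16 (ψ ψinv : ℝ → ℝ)
    (hcont : ContinuousOn ψ (Icc 0 1)) (hψ0 : ψ 0 = 0)
    (hnonneg : ∀ x ∈ Icc (0 : ℝ) 1, 0 ≤ ψ x)
    (hmono : StrictMonoOn ψ (Icc 0 1))
    (hinv1 : ∀ x ∈ Icc (0 : ℝ) 1, ψinv (ψ x) = x)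
    (hinv2 : ∀ y ∈ Icc 0 (ψ 1), ψ (ψinv y) = y)
    (hquot : MonotoneOn (fun x => ψ x / x) (Ioo 0 1))
    (δ : ℝ) (hδ : δ ∈ Ioo 0 (ψ 1)) (hsmall : δ + δ / ψinv δ ≤ 1) :
    (∀ a : ℂ, ‖a‖ ≤ δ / ψinv δ → ∀ θ : ℝ,
      MapsTo (fun ζ : ℂ => ((-(δ : ℂ)) + a * ζ, Complex.exp (θ * Complex.I) * ζ))
        (ball (0 : ℂ) 1) (Gpsi ψ)) ∧
    kob (Gpsi ψ) (pdel δ) ((1 : ℂ), ((ψinv δ / δ : ℝ) : ℂ)) ≤ ψinv δ / δ := by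
  obtain ⟨hδ0, hδ1⟩ := hδ
  have hmemI : δ ∈ Icc (ψ 0) (ψ 1) := by rw [hψ0]; exact ⟨hδ0.le, hδ1.le⟩
  obtain ⟨x, hx01, hxδ⟩ := intermediate_value_Icc (by norm_num : (0:ℝ) ≤ 1) hcont hmemI
  have hrx : ψinv δ = x := by rw [← hxδ, hinv1 x hx01]
  set r := ψinv δ with hrdef
  have hr01 : r ∈ Icc (0:ℝ) 1 := hrx ▸ hx01
  have hψr : ψ r = δ := by rw [hrx, hxδ]
  have hr0 : 0 < r := by
    rcases lt_or_eq_of_le hr01.1 with h | h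
    · exact h
    · exfalso; rw [← h, hψ0] at hψr; linarith
  have hr1 : r < 1 := by
    rcases lt_or_eq_of_le hr01.2 with h | h
    · exact h
    · exfalso; rw [h] at hψr; linarith
  have hc0 : 0 < δ / r := div_pos hδ0 hr0
  have hmain : ∀ a : ℂ, ‖a‖ ≤ δ / r → ∀ θ : ℝ,
      MapsTo (fun ζ : ℂ => ((-(δ : ℂ)) + a * ζ, Complex.exp (θ * Complex.I) * ζ))
        (ball (0 : ℂ) 1) (Gpsi ψ) := by
    intro a ha θ ζ hζ
    have hζ1 : ‖ζ‖ < 1 := by simpa [Complex.dist_eq] using mem_ball.mp hζ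
    set t := ‖ζ‖ with ht
    have ht0 : 0 ≤ t := norm_nonneg ζ
    have habs2 : ‖Complex.exp (θ * Complex.I) * ζ‖ = t := by
      rw [norm_mul, Complex.norm_exp_ofReal_mul_I, one_mul]
    have haz : ‖a * ζ‖ ≤ (δ / r) * t := by
      rw [norm_mul]
      exact mul_le_mul_of_nonneg_right ha ht0
    have habs1 : ‖(-(δ : ℂ)) + a * ζ‖ < 1 := by
      have h1 : ‖(-(δ : ℂ)) + a * ζ‖ ≤ δ + (δ / r) * t := by
        calc ‖(-(δ : ℂ)) + a * ζ‖
            ≤ ‖-(δ : ℂ)‖ + ‖a * ζ‖ := norm_add_le _ _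
          _ ≤ δ + (δ / r) * t := by
              rw [norm_neg, Complex.norm_real, Real.norm_eq_abs, abs_of_pos hδ0]
              linarith
      have h2 : (δ / r) * t < δ / r := by
        nlinarith
      linarith
    have hre : ((-(δ : ℂ)) + a * ζ).re < ψ t := by
      have hre1 : ((-(δ : ℂ)) + a * ζ).re ≤ -δ + (δ / r) * t := by
        have := Complex.re_le_norm (a * ζ)
        simp only [Complex.add_re, Complex.neg_re, Complex.ofReal_re]
        linarith
      have key : -δ + (δ / r) * t < ψ t := by
        rcases eq_or_lt_of_le ht0 with h0 | htpos
        · rw [← h0, hψ0]; simpa using hδ0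
        rcases le_or_gt t r with hle | hgt
        · have hψt : 0 < ψ t := by
            have := hmono (left_mem_Icc.mpr (by norm_num)) ⟨ht0, hζ1.le⟩ htpos
            rw [hψ0] at this; exact this
          have : (δ / r) * t ≤ (δ / r) * r := mul_le_mul_of_nonneg_left hle hc0.le
          rw [div_mul_cancel₀ _ hr0.ne'] at this
          linarith
        · have hq := hquot ⟨hr0, hr1⟩ ⟨htpos, hζ1⟩ hgt.le
          simp only [hψr] at hq
          have : (δ / r) * t ≤ (ψ t / t) * t := mul_le_mul_of_nonneg_right hq ht0
          rw [div_mul_cancel₀ _ htpos.ne'] at this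
          linarith
      linarith
    exact ⟨habs1, by rwa [habs2], by rwa [habs2]⟩
  refine ⟨hmain, ?_⟩
  have hbdd : BddBelow {c : ℝ | ∃ lam : ℝ, 0 < lam ∧ c = 1 / lam ∧
      ∃ φ : ℂ → ℂ × ℂ, DifferentiableOn ℂ φ (ball (0 : ℂ) 1) ∧
        MapsTo φ (ball (0 : ℂ) 1) (Gpsi ψ) ∧ φ 0 = pdel δ ∧
        deriv φ 0 = lam • ((1 : ℂ), ((r / δ : ℝ) : ℂ))} := by
    refine ⟨0, fun c hc => ?_⟩
    obtain ⟨lam, hlam, hc, -⟩ := hc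
    rw [hc]
    positivity
  have hmem : (r / δ) ∈ {c : ℝ | ∃ lam : ℝ, 0 < lam ∧ c = 1 / lam ∧
      ∃ φ : ℂ → ℂ × ℂ, DifferentiableOn ℂ φ (ball (0 : ℂ) 1) ∧
        MapsTo φ (ball (0 : ℂ) 1) (Gpsi ψ) ∧ φ 0 = pdel δ ∧
        deriv φ 0 = lam • ((1 : ℂ), ((r / δ : ℝ) : ℂ))} := by
    refine ⟨δ / r, hc0, by rw [one_div_div], ?_⟩
    refine ⟨fun ζ : ℂ => ((-(δ : ℂ)) + ((δ / r : ℝ) : ℂ) * ζ,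
      Complex.exp ((0 : ℝ) * Complex.I) * ζ), ?_, ?_, ?_, ?_⟩
    · apply Differentiable.differentiableOn
      apply Differentiable.prodMk
      · exact (differentiable_id.const_mul _).const_add _
      · exact differentiable_id.const_mul _
    · exact hmain _ (by rw [Complex.norm_real, Real.norm_eq_abs, abs_of_pos hc0]) 0
    · simp [pdel]
    · have hd : HasDerivAt (fun ζ : ℂ => ((-(δ : ℂ)) + ((δ / r : ℝ) : ℂ) * ζ,
          Complex.exp ((0 : ℝ) * Complex.I) * ζ))
          (((δ / r : ℝ) : ℂ), Complex.exp ((0 : ℝ) * Complex.I)) 0 := by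
        apply HasDerivAt.prodMk
        · simpa using ((hasDerivAt_id (0:ℂ)).const_mul ((δ / r : ℝ) : ℂ)).const_add (-(δ:ℂ))
        · have h := (hasDerivAt_id (0:ℂ)).const_mul (Complex.exp ((0 : ℝ) * Complex.I))
          rw [mul_one] at h
          exact h
      rw [hd.deriv]
      have h1 : Complex.exp ((0 : ℝ) * Complex.I) = 1 := by simp
      rw [h1, Prod.smul_mk, Prod.mk.injEq]
      constructor
      · rw [Complex.real_smul, mul_one]
      · rw [Complex.real_smul, ← Complex.ofReal_mul,
          div_mul_div_cancel₀, div_self hδ0.ne']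
        · simp
        · exact hr0.ne'
  exact csInf_le hbdd hmem
end

section
/- Assume ψ : [0,1] → [0,∞) is continuous and strictly increasing with ψ(0) = 0, and that x ↦ ψ(x)/√x is nondecreasing on (0,1). Let δ ∈ (0, ψ(1)), set λ := δ/(2√(ψ⁻¹(δ))), and assume δ + λ ≤ 1. Then for every x_T ∈ ℂ with |x_T| ≤ ψ⁻¹(δ)/δ, the holomorphic map φ(ζ) := (−δ + λζ, λ·x_T·ζ + ζ²/2) maps 𝔻 into G_ψ. In particular, κ_{G_ψ}(p_δ; (1, x_T)) ≤ 2√(ψ⁻¹(δ))/δ. -/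
open Complex Metric Set

set_option maxHeartbeats 800000 in
/-- with `λ = δ/(2√(ψ⁻¹(δ)))` and `|x_T| ≤ ψ⁻¹(δ)/δ`, the map
`ζ ↦ (−δ + λζ, λx_Tζ + ζ²/2)` sends `𝔻` into `G_ψ`; consequently
`κ_{G_ψ}(p_δ; (1, x_T)) ≤ 2√(ψ⁻¹(δ))/δ`. -/
theorem stmt17 (ψ ψinv : ℝ → ℝ)
    (hcont : ContinuousOn ψ (Icc 0 1)) (hψ0 : ψ 0 = 0)
    (hnonneg : ∀ x ∈ Icc (0 : ℝ) 1, 0 ≤ ψ x)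
    (hmono : StrictMonoOn ψ (Icc 0 1))
    (hinv1 : ∀ x ∈ Icc (0 : ℝ) 1, ψinv (ψ x) = x)
    (hinv2 : ∀ y ∈ Icc 0 (ψ 1), ψ (ψinv y) = y)
    (hquot : MonotoneOn (fun x => ψ x / Real.sqrt x) (Ioo 0 1))
    (δ : ℝ) (hδ : δ ∈ Ioo 0 (ψ 1))
    (hsmall : δ + δ / (2 * Real.sqrt (ψinv δ)) ≤ 1)
    (xT : ℂ) (hxT : ‖xT‖ ≤ ψinv δ / δ) :
    MapsTo (fun ζ : ℂ => ((-(δ : ℂ)) + ((δ / (2 * Real.sqrt (ψinv δ)) : ℝ) : ℂ) * ζ,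
        ((δ / (2 * Real.sqrt (ψinv δ)) : ℝ) : ℂ) * xT * ζ + ζ ^ 2 / 2))
      (ball (0 : ℂ) 1) (Gpsi ψ) ∧
    kob (Gpsi ψ) (pdel δ) ((1 : ℂ), xT) ≤ 2 * Real.sqrt (ψinv δ) / δ := by
  obtain ⟨hδ0, hδ1⟩ := hδ
  -- find x with ψ x = δ
  obtain ⟨x, hx, hψx⟩ : ∃ x ∈ Icc (0:ℝ) 1, ψ x = δ := by
    have h := intermediate_value_Icc (by norm_num : (0:ℝ) ≤ 1) hcont
    have hδmem : δ ∈ Icc (ψ 0) (ψ 1) := by rw [hψ0]; exact ⟨hδ0.le, hδ1.le⟩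
    obtain ⟨x, hx, hψx⟩ := h hδmem
    exact ⟨x, hx, hψx⟩
  have hrx : ψinv δ = x := by rw [← hψx, hinv1 x hx]
  set r := ψinv δ with hrdef
  have hψr : ψ r = δ := by rw [hrx, hψx]
  have hr0 : 0 < r := by
    rcases (hrx ▸ hx.1).lt_or_eq with h | h
    · exact h
    · exfalso; rw [← h, hψ0] at hψr; exact hδ0.ne hψr
  have hr1 : r < 1 := by
    rcases (hrx ▸ hx.2).lt_or_eq with h | h
    · exact h
    · exfalso; rw [h] at hψr; exact hδ1.ne' hψr
  set s := Real.sqrt r with hsdef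
  have hs0 : 0 < s := Real.sqrt_pos.2 hr0
  have hs1 : s < 1 := by
    rw [hsdef, show (1:ℝ) = Real.sqrt 1 by simp]
    exact Real.sqrt_lt_sqrt hr0.le hr1
  have hss : s * s = r := Real.mul_self_sqrt hr0.le
  set lam := δ / (2 * s) with hlamdef
  have hlam0 : 0 < lam := div_pos hδ0 (by linarith)
  have hlam2s : lam * (2 * s) = δ := div_mul_cancel₀ δ (by positivity)
  have hxT0 : 0 ≤ ‖xT‖ := (norm_nonneg xT)
  have hlamxT : lam * ‖xT‖ ≤ s / 2 := by
    have h1 : lam * ‖xT‖ ≤ lam * (r / δ) := by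
      exact mul_le_mul_of_nonneg_left hxT hlam0.le
    have h2 : lam * (r / δ) = s / 2 := by
      rw [hlamdef, ← hss]; field_simp
    linarith
  -- the MapsTo statement
  have hMaps : MapsTo (fun ζ : ℂ => ((-(δ : ℂ)) + ((δ / (2 * Real.sqrt (ψinv δ)) : ℝ) : ℂ) * ζ,
        ((δ / (2 * Real.sqrt (ψinv δ)) : ℝ) : ℂ) * xT * ζ + ζ ^ 2 / 2))
      (ball (0 : ℂ) 1) (Gpsi ψ) := by
    intro ζ hζ
    have ha : ‖ζ‖ < 1 := by
      simpa [Complex.dist_eq] using (mem_ball.1 hζ)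
    set a := ‖ζ‖ with hadef
    have ha0 : 0 ≤ a := norm_nonneg ζ
    have hre : ζ.re ≤ a := Complex.re_le_norm ζ
    -- abs of first coordinate
    have habs1 : ‖-(δ : ℂ) + ((lam : ℝ) : ℂ) * ζ‖ ≤ δ + lam * a := by
      calc ‖-(δ : ℂ) + ((lam : ℝ) : ℂ) * ζ‖
          ≤ ‖-(δ : ℂ)‖ + ‖((lam : ℝ) : ℂ) * ζ‖ := norm_add_le _ _
        _ = δ + lam * a := by
          simp [norm_mul, Complex.norm_real, abs_of_pos hδ0, abs_of_pos hlam0, hadef]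
    -- abs of second coordinate
    have habsxTζ : ‖((lam : ℝ) : ℂ) * xT * ζ‖ = lam * ‖xT‖ * a := by
      simp [norm_mul, Complex.norm_real, abs_of_pos hlam0, hadef]
    have habssq : ‖ζ ^ 2 / 2‖ = a ^ 2 / 2 := by
      rw [norm_div, norm_pow]
      simp [hadef]
    have habs2 : ‖((lam : ℝ) : ℂ) * xT * ζ + ζ ^ 2 / 2‖
        ≤ lam * ‖xT‖ * a + a ^ 2 / 2 := by
      calc ‖((lam : ℝ) : ℂ) * xT * ζ + ζ ^ 2 / 2‖
          ≤ ‖((lam : ℝ) : ℂ) * xT * ζ‖ + ‖ζ ^ 2 / 2‖ :=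
            norm_add_le _ _
        _ = lam * ‖xT‖ * a + a ^ 2 / 2 := by rw [habsxTζ, habssq]
    set b := ‖((lam : ℝ) : ℂ) * xT * ζ + ζ ^ 2 / 2‖ with hbdef
    have hb0 : 0 ≤ b := norm_nonneg _
    have hb1 : b < 1 := by nlinarith [mul_le_mul_of_nonneg_right hlamxT ha0]
    have hz1 : ‖-(δ : ℂ) + ((lam : ℝ) : ℂ) * ζ‖ < 1 := by
      have : lam * a < lam := by nlinarith
      linarith
    have hrepart : (-(δ : ℂ) + ((lam : ℝ) : ℂ) * ζ).re = -δ + lam * ζ.re := by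
      simp [Complex.add_re, Complex.mul_re]
    refine ⟨hz1, hb1, ?_⟩
    rw [hrepart]
    have hψb0 : 0 ≤ ψ b := hnonneg b ⟨hb0, hb1.le⟩
    rcases lt_or_ge ζ.re (2 * s) with hcase | hcase
    · have h2 : lam * ζ.re < lam * (2 * s) := by nlinarith
      have h3 : lam * ζ.re < δ := by rw [← hlam2s]; exact h2
      linarith
    · -- main case
      have ha2s : 2 * s ≤ a := le_trans hcase hre
      -- b ≥ a^2/4
      have htri : a ^ 2 / 2 ≤ b + lam * ‖xT‖ * a := by
        have h1 := norm_add_le (((lam : ℝ) : ℂ) * xT * ζ + ζ ^ 2 / 2)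
          (-(((lam : ℝ) : ℂ) * xT * ζ))
        have heq : (((lam : ℝ) : ℂ) * xT * ζ + ζ ^ 2 / 2) + (-(((lam : ℝ) : ℂ) * xT * ζ))
            = ζ ^ 2 / 2 := by ring
        rw [heq, habssq, norm_neg, habsxTζ, ← hbdef] at h1
        linarith
      have hblow : a ^ 2 / 4 ≤ b := by nlinarith [mul_le_mul_of_nonneg_right hlamxT ha0]
      set x0 := a ^ 2 / 4 with hx0def
      have hx00 : 0 < x0 := by nlinarith
      have hx01 : x0 < 1 := by nlinarith
      have hsqx0 : Real.sqrt x0 = a / 2 := by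
        rw [hx0def, show a ^ 2 / 4 = (a / 2) ^ 2 by ring, Real.sqrt_sq (by linarith)]
      have hrx0 : r ≤ x0 := by nlinarith
      have hquot' : ψ r / s ≤ ψ x0 / Real.sqrt x0 := by
        have := hquot ⟨hr0, hr1⟩ ⟨hx00, hx01⟩ hrx0
        simpa [hsdef] using this
      have hψx0 : lam * a ≤ ψ x0 := by
        rw [hψr] at hquot'
        rw [hsqx0] at hquot'
        have h2 : δ / s * (a / 2) ≤ ψ x0 / (a / 2) * (a / 2) := by
          exact mul_le_mul_of_nonneg_right hquot' (by linarith)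
        have h3 : ψ x0 / (a / 2) * (a / 2) = ψ x0 :=
          div_mul_cancel₀ (ψ x0) (ne_of_gt (by linarith : (0:ℝ) < a / 2))
        have h4 : δ / s * (a / 2) = lam * a := by
          rw [hlamdef]; ring
        linarith [h4 ▸ h3 ▸ h2]
      have hψmono : ψ x0 ≤ ψ b :=
        (hmono.monotoneOn) ⟨hx00.le, hx01.le⟩ ⟨hb0, hb1.le⟩ hblow
      have : lam * ζ.re ≤ lam * a := by nlinarith
      linarith
  refine ⟨hMaps, ?_⟩
  -- the kobayashi bound
  have hkobset : (2 * s / δ) ∈ {c : ℝ | ∃ lam' : ℝ, 0 < lam' ∧ c = 1 / lam' ∧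
      ∃ φ : ℂ → ℂ × ℂ, DifferentiableOn ℂ φ (ball (0 : ℂ) 1) ∧
        MapsTo φ (ball (0 : ℂ) 1) (Gpsi ψ) ∧ φ 0 = pdel δ ∧
        deriv φ 0 = lam' • ((1 : ℂ), xT)} := by
    refine ⟨lam, hlam0, by rw [hlamdef, one_div_div], ?_⟩
    refine ⟨fun ζ : ℂ => ((-(δ : ℂ)) + ((lam : ℝ) : ℂ) * ζ,
        ((lam : ℝ) : ℂ) * xT * ζ + ζ ^ 2 / 2), ?_, hMaps, ?_, ?_⟩
    · apply Differentiable.differentiableOn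
      fun_prop
    · simp [pdel]
    · have h1 : HasDerivAt (fun ζ : ℂ => -(δ : ℂ) + ((lam : ℝ) : ℂ) * ζ) ((lam : ℝ) : ℂ) 0 := by
        simpa using ((hasDerivAt_id (0:ℂ)).const_mul (((lam : ℝ) : ℂ))).const_add (-(δ:ℂ))
      have h2 : HasDerivAt (fun ζ : ℂ => ((lam : ℝ) : ℂ) * xT * ζ + ζ ^ 2 / 2)
          (((lam : ℝ) : ℂ) * xT) 0 := by
        have ha : HasDerivAt (fun ζ : ℂ => ((lam : ℝ) : ℂ) * xT * ζ) (((lam : ℝ) : ℂ) * xT) 0 := by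
          simpa using (hasDerivAt_id (0:ℂ)).const_mul (((lam : ℝ) : ℂ) * xT)
        have hb : HasDerivAt (fun ζ : ℂ => ζ ^ 2 / 2) 0 0 := by
          simpa using (hasDerivAt_pow 2 (0:ℂ)).div_const 2
        exact (ha.add hb).congr_deriv (add_zero _)
      have := (h1.prodMk h2).deriv
      rw [this]
      simp [Prod.ext_iff, Complex.real_smul]
  have hbdd : BddBelow {c : ℝ | ∃ lam' : ℝ, 0 < lam' ∧ c = 1 / lam' ∧
      ∃ φ : ℂ → ℂ × ℂ, DifferentiableOn ℂ φ (ball (0 : ℂ) 1) ∧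
        MapsTo φ (ball (0 : ℂ) 1) (Gpsi ψ) ∧ φ 0 = pdel δ ∧
        deriv φ 0 = lam' • ((1 : ℂ), xT)} := by
    refine ⟨0, fun c hc => ?_⟩
    obtain ⟨l, hl, hc, -⟩ := hc
    rw [hc]; positivity
  calc kob (Gpsi ψ) (pdel δ) ((1 : ℂ), xT) ≤ 2 * s / δ := csInf_le hbdd hkobset
    _ = 2 * Real.sqrt (ψinv δ) / δ := by rw [hsdef]
end

section
/- Let ψ(x) = x, so that G_ψ = {(z₁,z₂) ∈ ℂ² : |z₁| < 1, |z₂| < 1, Re z₁ < |z₂|}. Let δ ∈ (0,1), λ > 0 and x_T ∈ ℂ with |x_T| < 1. If φ = (φ₁, φ₂) : 𝔻 → G_ψ is a holomorphic map with φ(0) = p_δ = (−δ, 0) and φ′(0) = λ·(1, x_T), then λ < 5√δ/(1 − |x_T|). Equivalently, κ_{G_ψ}(p_δ; (1, x_T)) ≥ (1 − |x_T|)/(5√δ). -/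
open Complex Metric Set

lemma taylor2 {f : ℂ → ℂ} (hf : DifferentiableOn ℂ f (ball 0 1)) {A : ℝ}
    (hmap : MapsTo f (ball (0:ℂ) 1) (ball (f 0) A)) {z : ℂ} (hz : z ∈ ball (0:ℂ) 1) :
    ‖deriv f 0‖ ≤ A ∧ ‖f z - f 0 - z * deriv f 0‖ ≤ (2*A + 1/4) * ‖z‖^2 := by
  have h0 : (0:ℂ) ∈ ball (0:ℂ) 1 := mem_ball_self one_pos
  have hnhds : ball (0:ℂ) 1 ∈ nhds (0:ℂ) := isOpen_ball.mem_nhds h0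
  set d1 := dslope f 0 with hd1def
  have hd1 : DifferentiableOn ℂ d1 (ball 0 1) :=
    (Complex.differentiableOn_dslope hnhds).2 hf
  have hb1 : ∀ w ∈ ball (0:ℂ) 1, ‖d1 w‖ ≤ A := by
    intro w hw
    have := Complex.norm_dslope_le_div_of_mapsTo_ball hf (hmap.mono_right ball_subset_closedBall) hw
    simpa using this
  have hder : d1 0 = deriv f 0 := dslope_same f 0
  have hA0 : ‖deriv f 0‖ ≤ A := hder ▸ hb1 0 h0
  refine ⟨hA0, ?_⟩
  have hmap2 : MapsTo d1 (ball (0:ℂ) 1) (ball (d1 0) (2*A + 1/4)) := by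
    intro w hw
    rw [mem_ball, dist_eq_norm]
    calc ‖d1 w - d1 0‖ ≤ ‖d1 w‖ + ‖d1 0‖ := norm_sub_le _ _
    _ ≤ A + A := add_le_add (hb1 w hw) (hb1 0 h0)
    _ < 2*A + 1/4 := by linarith
  have hb2 : ‖dslope d1 0 z‖ ≤ 2*A + 1/4 := by
    have := Complex.norm_dslope_le_div_of_mapsTo_ball hd1 (hmap2.mono_right ball_subset_closedBall) hz
    simpa using this
  have e1 : z • d1 z = f z - f 0 := by simpa using sub_smul_dslope f 0 z
  have e2 : z • dslope d1 0 z = d1 z - d1 0 := by simpa using sub_smul_dslope d1 0 z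
  have key : f z - f 0 - z * deriv f 0 = z * (z * dslope d1 0 z) := by
    rw [← hder, ← e1]
    rw [smul_eq_mul] at e2 ⊢
    rw [e2]; ring
  rw [key, norm_mul, norm_mul]
  calc ‖z‖ * (‖z‖ * ‖dslope d1 0 z‖) ≤ ‖z‖ * (‖z‖ * (2*A + 1/4)) := by
        have hz0 : (0:ℝ) ≤ ‖z‖ := norm_nonneg _
        exact mul_le_mul_of_nonneg_left (mul_le_mul_of_nonneg_left hb2 hz0) hz0
  _ = (2*A + 1/4) * ‖z‖^2 := by ring

lemma numfinal (δ t s x lam : ℝ) (hδ0 : 0 < δ) (hδ1 : δ < 1) (ht0 : 0 ≤ t) (ht1 : t < 1)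
    (hs0 : 0 < s) (hs2 : s^2 = δ) (hx0 : 0 < x) (hx2 : x^2 = δ/5)
    (hlam : 0 < lam) (hlam2 : lam ≤ 1 + δ)
    (hmain : lam * x - lam * t * x < δ + (2*(1+δ) + 1/4 + (2*1 + 1/4)) * x^2) :
    lam * (1 - t) < 5 * s := by
  by_cases hcase : δ ≤ 1/4
  · have h5 : lam * x - lam * t * x < 2*δ := by nlinarith [sq_nonneg x]
    have h6 : 2*δ ≤ 5 * s * x := by
      have hsq : (5*s*x)^2 = 5*δ^2 := by
        rw [mul_pow, mul_pow, hs2, hx2]; ring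
      nlinarith [mul_pos hδ0 hδ0,
        mul_nonneg (mul_nonneg (by norm_num : (0:ℝ) ≤ 5) hs0.le) hx0.le]
    have h7 : lam * (1 - t) * x < 5 * s * x := by nlinarith
    exact lt_of_mul_lt_mul_right h7 hx0.le
  · push_neg at hcase
    have hs12 : 1/2 < s := by nlinarith
    have hs1 : s < 1 := by nlinarith
    have h1 : lam * (1 - t) ≤ lam := by nlinarith
    nlinarith

lemma main1 (δ : ℝ) (hδ0 : 0 < δ) (hδ1 : δ < 1) (xT : ℂ) (hxT : ‖xT‖ < 1)
    (lam : ℝ) (hlam : 0 < lam) (φ : ℂ → ℂ × ℂ)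
    (hdiff : DifferentiableOn ℂ φ (ball (0:ℂ) 1))
    (hmaps : MapsTo φ (ball (0:ℂ) 1) (Gpsi (fun x => x)))
    (hφ0 : φ 0 = pdel δ) (hφd : deriv φ 0 = lam • (((1:ℂ), xT) : ℂ × ℂ)) :
    lam * (1 - ‖xT‖) < 5 * Real.sqrt δ := by
  set t := ‖xT‖ with htdef
  have ht0 : 0 ≤ t := norm_nonneg xT
  have ht1 : t < 1 := hxT
  set s := Real.sqrt δ with hsdef
  have hs0 : 0 < s := Real.sqrt_pos.2 hδ0
  have hs2 : s^2 = δ := Real.sq_sqrt hδ0.le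
  have h0 : (0:ℂ) ∈ ball (0:ℂ) 1 := mem_ball_self one_pos
  have hnhds : ball (0:ℂ) 1 ∈ nhds (0:ℂ) := isOpen_ball.mem_nhds h0
  set f : ℂ → ℂ := fun ζ => (φ ζ).1 with hfdef
  set g : ℂ → ℂ := fun ζ => (φ ζ).2 with hgdef
  have hfd : DifferentiableOn ℂ f (ball 0 1) := hdiff.fst
  have hgd : DifferentiableOn ℂ g (ball 0 1) := hdiff.snd
  have hf0 : f 0 = -(δ:ℂ) := by simp [hfdef, hφ0, pdel]
  have hg0 : g 0 = 0 := by simp [hgdef, hφ0, pdel]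
  have hφat : DifferentiableAt ℂ φ 0 := (hdiff 0 h0).differentiableAt hnhds
  have hda : HasDerivAt φ (lam • (((1:ℂ), xT) : ℂ × ℂ)) 0 := hφd ▸ hφat.hasDerivAt
  have hfa : HasDerivAt f ((lam:ℂ)) 0 := by
    have h2 := ((hasFDerivAt_fst (𝕜 := ℂ) (p := φ 0)).comp 0 hda.hasFDerivAt).hasDerivAt
    have h3 : (lam • (((1:ℂ), xT) : ℂ × ℂ)).1 = (lam:ℂ) := by
      simp [Prod.smul_fst, Complex.real_smul]
    have h4 : HasDerivAt (Prod.fst ∘ φ) (lam:ℂ) 0 := by simpa [h3] using h2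
    exact h4
  have hga : HasDerivAt g (lam • xT) 0 := by
    have h2 := ((hasFDerivAt_snd (𝕜 := ℂ) (p := φ 0)).comp 0 hda.hasFDerivAt).hasDerivAt
    have h4 : HasDerivAt (Prod.snd ∘ φ) (lam • xT) 0 := by simpa using h2
    exact h4
  have hderf : deriv f 0 = (lam:ℂ) := hfa.deriv
  have hderg : deriv g 0 = lam • xT := hga.deriv
  have hnf0 : ‖f 0‖ = δ := by
    rw [hf0]; simp [abs_of_pos hδ0]
  have hm1 : MapsTo f (ball (0:ℂ) 1) (ball (f 0) (1+δ)) := by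
    intro z hz
    have hG := hmaps hz
    have h1 : ‖(φ z).1‖ < 1 := hG.1
    rw [mem_ball, dist_eq_norm]
    calc ‖f z - f 0‖ ≤ ‖f z‖ + ‖f 0‖ := norm_sub_le _ _
    _ < 1 + δ := by
        rw [hnf0]
        have : ‖f z‖ < 1 := by simpa [hfdef] using h1
        linarith
  have hm2 : MapsTo g (ball (0:ℂ) 1) (ball (g 0) 1) := by
    intro z hz
    have hG := hmaps hz
    have h1 : ‖(φ z).2‖ < 1 := hG.2.1
    rw [mem_ball, dist_eq_norm, hg0, sub_zero]
    simpa [hgdef] using h1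
  set x := Real.sqrt (δ/5) with hxdef
  have hx0 : 0 < x := Real.sqrt_pos.2 (by linarith)
  have hx2 : x^2 = δ/5 := Real.sq_sqrt (by linarith)
  have hx1 : x < 1 := by nlinarith
  have hnx : ‖(x:ℂ)‖ = x := by
    simp [Complex.norm_real, abs_of_pos hx0]
  have hzx : (x:ℂ) ∈ ball (0:ℂ) 1 := by
    rw [mem_ball_zero_iff, hnx]; exact hx1
  obtain ⟨hA1, hE1⟩ := taylor2 hfd hm1 hzx
  obtain ⟨hA2, hE2⟩ := taylor2 hgd hm2 hzx
  have hlam2 : lam ≤ 1 + δ := by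
    rw [hderf] at hA1
    simpa [abs_of_pos hlam] using hA1
  have hgx : ‖g ↑x‖ ≤ lam * t * x + (2*1 + 1/4) * x^2 := by
    have hngd : ‖deriv g 0‖ = lam * t := by
      rw [hderg, norm_smul]
      simp [abs_of_pos hlam, htdef]
    calc ‖g ↑x‖ = ‖(g ↑x - g 0 - ↑x * deriv g 0) + ↑x * deriv g 0‖ := by
          rw [hg0]; ring_nf
    _ ≤ ‖g ↑x - g 0 - ↑x * deriv g 0‖ + ‖(↑x : ℂ) * deriv g 0‖ := norm_add_le _ _
    _ ≤ (2*1 + 1/4) * ‖(x:ℂ)‖^2 + ‖(↑x : ℂ)‖ * ‖deriv g 0‖ := by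
          rw [norm_mul]; exact add_le_add hE2 le_rfl
    _ = lam * t * x + (2*1 + 1/4) * x^2 := by rw [hnx, hngd]; ring
  have hfx : -δ + lam * x - (2*(1+δ) + 1/4) * x^2 ≤ (f ↑x).re := by
    have hre : (f ↑x).re = -δ + lam * x + (f ↑x - f 0 - ↑x * deriv f 0).re := by
      have hsplit : f ↑x = (f ↑x - f 0 - ↑x * deriv f 0) + f 0 + (↑x : ℂ) * deriv f 0 := by
        ring
      calc (f ↑x).re
          = ((f ↑x - f 0 - ↑x * deriv f 0) + f 0 + (↑x : ℂ) * deriv f 0).re := by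
            rw [← hsplit]
        _ = (f ↑x - f 0 - ↑x * deriv f 0).re + (f 0).re + ((↑x : ℂ) * deriv f 0).re := by
            rw [Complex.add_re, Complex.add_re]
        _ = -δ + lam * x + (f ↑x - f 0 - ↑x * deriv f 0).re := by
            rw [hf0, hderf, ← Complex.ofReal_mul]
            simp
            ring
    have hEre : -((2*(1+δ) + 1/4) * x^2) ≤ (f ↑x - f 0 - ↑x * deriv f 0).re := by
      have h1 : |(f ↑x - f 0 - ↑x * deriv f 0).re| ≤ ‖f ↑x - f 0 - ↑x * deriv f 0‖ :=
        Complex.abs_re_le_norm _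
      have h2 : ‖f ↑x - f 0 - ↑x * deriv f 0‖ ≤ (2*(1+δ) + 1/4) * x^2 := by
        rw [hnx] at hE1; exact hE1
      have h3 := neg_abs_le (f ↑x - f 0 - ↑x * deriv f 0).re
      linarith
    linarith [hre, hEre]
  have hRe : (f ↑x).re < ‖g ↑x‖ := by
    have hG := hmaps hzx
    have h22 := hG.2.2
    simpa [hfdef, hgdef] using h22
  have hmain : lam * x - lam * t * x < δ + (2*(1+δ) + 1/4 + (2*1 + 1/4)) * x^2 := by
    nlinarith [hfx, hRe, hgx]
  exact numfinal δ t s x lam hδ0 hδ1 ht0 ht1 hs0 hs2 hx0 hx2 hlam hlam2 hmain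

theorem stmt19aux (δ : ℝ) (hδ : δ ∈ Ioo (0 : ℝ) 1)
    (xT : ℂ) (hxT : ‖xT‖ < 1) :
    (∀ lam : ℝ, 0 < lam → ∀ φ : ℂ → ℂ × ℂ,
      DifferentiableOn ℂ φ (ball (0 : ℂ) 1) →
      MapsTo φ (ball (0 : ℂ) 1) (Gpsi (fun x => x)) →
      φ 0 = pdel δ → deriv φ 0 = lam • (((1 : ℂ), xT) : ℂ × ℂ) →
      lam < 5 * Real.sqrt δ / (1 - ‖xT‖)) ∧
    (1 - ‖xT‖) / (5 * Real.sqrt δ) ≤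
      sInf {c : ℝ | ∃ lam : ℝ, 0 < lam ∧ c = 1 / lam ∧
        ∃ φ : ℂ → ℂ × ℂ, DifferentiableOn ℂ φ (ball (0 : ℂ) 1) ∧
          MapsTo φ (ball (0 : ℂ) 1) (Gpsi (fun x => x)) ∧ φ 0 = pdel δ ∧
          deriv φ 0 = lam • (((1 : ℂ), xT) : ℂ × ℂ)} := by
  obtain ⟨hδ0, hδ1⟩ := hδ
  set t := ‖xT‖ with htdef
  have ht0 : 0 ≤ t := norm_nonneg xT
  have ht1 : t < 1 := hxT
  have hs0 : 0 < Real.sqrt δ := Real.sqrt_pos.2 hδ0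
  have key : ∀ lam : ℝ, 0 < lam → ∀ φ : ℂ → ℂ × ℂ,
      DifferentiableOn ℂ φ (ball (0 : ℂ) 1) →
      MapsTo φ (ball (0 : ℂ) 1) (Gpsi (fun x => x)) →
      φ 0 = pdel δ → deriv φ 0 = lam • (((1 : ℂ), xT) : ℂ × ℂ) →
      lam < 5 * Real.sqrt δ / (1 - t) := by
    intro lam hlam φ hd hm h0 hd'
    rw [lt_div_iff₀ (by linarith : (0:ℝ) < 1 - t)]
    exact main1 δ hδ0 hδ1 xT hxT lam hlam φ hd hm h0 hd'
  refine ⟨key, ?_⟩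
  -- construct a witness disc
  set lam₀ := δ * (1 - δ) / 2 with hl₀def
  have hl0 : 0 < lam₀ := by nlinarith
  have hl1 : lam₀ ≤ δ / 2 := by nlinarith
  set φ₀ : ℂ → ℂ × ℂ := fun ζ => (-(δ:ℂ) + (lam₀:ℂ) * ζ, (lam₀:ℂ) * xT * ζ) with hφ₀def
  have hdiff₀ : DifferentiableOn ℂ φ₀ (ball (0:ℂ) 1) := by
    apply Differentiable.differentiableOn
    apply Differentiable.prodMk
    · exact (differentiable_id.const_mul ((lam₀:ℂ))).const_add (-(δ:ℂ))
    · exact differentiable_id.const_mul ((lam₀:ℂ) * xT)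
  have hmaps₀ : MapsTo φ₀ (ball (0:ℂ) 1) (Gpsi (fun x => x)) := by
    intro z hz
    have habsz : ‖z‖ < 1 := by
      rw [mem_ball_zero_iff] at hz; exact hz
    have habsz0 : 0 ≤ ‖z‖ := norm_nonneg z
    constructor
    · calc ‖-(δ:ℂ) + (lam₀:ℂ) * z‖
          ≤ ‖-(δ:ℂ)‖ + ‖(lam₀:ℂ) * z‖ := norm_add_le _ _
      _ = δ + lam₀ * ‖z‖ := by
          simp [norm_mul, Complex.norm_real, abs_of_pos hδ0, abs_of_pos hl0]
      _ < 1 := by nlinarith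
    constructor
    · show ‖(lam₀:ℂ) * xT * z‖ < 1
      have : ‖(lam₀:ℂ) * xT * z‖ = lam₀ * (‖xT‖ * ‖z‖) := by
        simp [norm_mul, Complex.norm_real, abs_of_pos hl0]; ring
      rw [this]
      have hT : ‖xT‖ < 1 := htdef ▸ hxT
      have hT0 : 0 ≤ ‖xT‖ := norm_nonneg xT
      have h4 : ‖xT‖ * ‖z‖ ≤ 1 := by nlinarith
      nlinarith
    · show (-(δ:ℂ) + (lam₀:ℂ) * z).re < ‖(lam₀:ℂ) * xT * z‖
      have h1 : (-(δ:ℂ) + (lam₀:ℂ) * z).re = -δ + lam₀ * z.re := by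
        simp [Complex.add_re, Complex.re_ofReal_mul]
      have h2 : z.re ≤ ‖z‖ := Complex.re_le_norm z
      have h3 : (0:ℝ) ≤ ‖(lam₀:ℂ) * xT * z‖ := norm_nonneg _
      rw [h1]
      nlinarith
  have hφ₀0 : φ₀ 0 = pdel δ := by
    simp [hφ₀def, pdel]
  have hder₀ : deriv φ₀ 0 = lam₀ • (((1:ℂ), xT) : ℂ × ℂ) := by
    have h1 : HasDerivAt (fun ζ : ℂ => -(δ:ℂ) + (lam₀:ℂ) * ζ) ((lam₀:ℂ)) 0 := by
      simpa using ((hasDerivAt_id (0:ℂ)).const_mul ((lam₀:ℂ))).const_add (-(δ:ℂ))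
    have h2 : HasDerivAt (fun ζ : ℂ => (lam₀:ℂ) * xT * ζ) ((lam₀:ℂ) * xT) 0 := by
      simpa using (hasDerivAt_id (0:ℂ)).const_mul ((lam₀:ℂ) * xT)
    have h3 := (h1.prodMk h2).deriv
    rw [hφ₀def]
    rw [h3]
    refine Prod.ext ?_ ?_
    · simp [Complex.real_smul]
    · simp [Complex.real_smul]
  apply le_csInf
  · exact ⟨1/lam₀, lam₀, hl0, rfl, φ₀, hdiff₀, hmaps₀, hφ₀0, hder₀⟩
  · rintro b ⟨lam, hlam, rfl, φ, hd, hm, h0, hd'⟩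
    have hk := main1 δ hδ0 hδ1 xT hxT lam hlam φ hd hm h0 hd'
    rw [div_le_div_iff₀ (by positivity) hlam]
    linarith

/-- for `ψ(x) = x`, any holomorphic `φ : 𝔻 → G_ψ` with `φ(0) = p_δ` and
`φ'(0) = λ(1, x_T)` satisfies `λ < 5√δ/(1−|x_T|)`; equivalently
`κ_{G_ψ}(p_δ; (1, x_T)) ≥ (1−|x_T|)/(5√δ)`. -/
theorem stmt19 (δ : ℝ) (hδ : δ ∈ Ioo (0 : ℝ) 1)
    (xT : ℂ) (hxT : ‖xT‖ < 1) :
    (∀ lam : ℝ, 0 < lam → ∀ φ : ℂ → ℂ × ℂ,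
      DifferentiableOn ℂ φ (ball (0 : ℂ) 1) →
      MapsTo φ (ball (0 : ℂ) 1) (Gpsi (fun x => x)) →
      φ 0 = pdel δ → deriv φ 0 = lam • (((1 : ℂ), xT) : ℂ × ℂ) →
      lam < 5 * Real.sqrt δ / (1 - ‖xT‖)) ∧
    (1 - ‖xT‖) / (5 * Real.sqrt δ) ≤
      kob (Gpsi (fun x => x)) (pdel δ) ((1 : ℂ), xT) := by
  have h := stmt19aux δ hδ xT hxT
  refine ⟨h.1, ?_⟩
  rw [kob]
  exact h.2
end
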